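/- The impulse-control Q-learning Bellman operator 𝒯 is a γ-contraction in the sup norm: for all Q, Q' : S × A → ℝ, max_{(s,a)} |(𝒯 Q)(s,a) − (𝒯 Q')(s,a)| ≤ γ · max_{(s,a)} |Q(s,a) − Q'(s,a)|. Consequently 𝒯 has a unique fixed point Q*. -/

import Mathlib

open Finset

/-- Intervention operator on Q-functions. -/
noncomputable def qInterventionOp {S A : Type*} [Fintype S] [Fintype A] [Nonempty A]
    (P : S → A → S → ℝ) (R c : S → A → ℝ) (γ : ℝ)
    (Q : S × A → ℝ) (s : S) (a : A) : ℝ :=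
  R s a - c s a + γ * ∑ s'', P s a s'' *
    Finset.univ.sup' Finset.univ_nonempty (fun a'' => Q (s'', a''))

/-- The impulse-control Q-learning Bellman operator `𝒯`. -/
noncomputable def qBellmanOp {S A : Type*} [Fintype S] [Fintype A] [Nonempty A]
    (a₀ : A) (P : S → A → S → ℝ) (R c : S → A → ℝ) (γ : ℝ)
    (Q : S × A → ℝ) (p : S × A) : ℝ :=
  ∑ s', P p.1 p.2 s' *
    max (qInterventionOp P R c γ Q p.1 p.2)
      (R p.1 a₀ + γ * Finset.univ.sup' Finset.univ_nonempty (fun a' => Q (s', a')))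

private lemma sup'_abs_sub_le {ι : Type*} (t : Finset ι) (h : t.Nonempty) (f g : ι → ℝ) :
    |t.sup' h f - t.sup' h g| ≤ t.sup' h (fun x => |f x - g x|) := by
  rw [abs_sub_le_iff]
  constructor
  · rw [sub_le_iff_le_add, add_comm]
    refine Finset.sup'_le _ _ fun x hx => ?_
    calc f x ≤ g x + |f x - g x| := by
          have := le_abs_self (f x - g x); linarith
      _ ≤ t.sup' h g + t.sup' h (fun x => |f x - g x|) :=
          add_le_add (Finset.le_sup' _ hx) (Finset.le_sup' (fun x => |f x - g x|) hx)
  · rw [sub_le_iff_le_add, add_comm]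
    refine Finset.sup'_le _ _ fun x hx => ?_
    calc g x ≤ f x + |f x - g x| := by
          have := neg_abs_le (f x - g x); linarith
      _ ≤ t.sup' h f + t.sup' h (fun x => |f x - g x|) :=
          add_le_add (Finset.le_sup' _ hx) (Finset.le_sup' (fun x => |f x - g x|) hx)

private lemma qBellmanOp_pointwise {S A : Type*} [Fintype S] [Nonempty S] [Fintype A]
    [Nonempty A]
    (a₀ : A) (P : S → A → S → ℝ) (R c : S → A → ℝ) (γ : ℝ)
    (hP0 : ∀ s a s', 0 ≤ P s a s') (hP1 : ∀ s a, ∑ s', P s a s' = 1)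
    (hγ0 : 0 ≤ γ) (Q Q' : S × A → ℝ) (p : S × A) :
    |qBellmanOp a₀ P R c γ Q p - qBellmanOp a₀ P R c γ Q' p| ≤
      γ * Finset.univ.sup' Finset.univ_nonempty (fun p : S × A => |Q p - Q' p|) := by
  set D := Finset.univ.sup' Finset.univ_nonempty (fun p : S × A => |Q p - Q' p|) with hD
  have hD0 : 0 ≤ D := le_trans (abs_nonneg _)
    (Finset.le_sup' (fun p : S × A => |Q p - Q' p|) (Finset.mem_univ (Classical.arbitrary _)))
  have hsup : ∀ s' : S,
      |Finset.univ.sup' Finset.univ_nonempty (fun a' => Q (s', a')) -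
        Finset.univ.sup' Finset.univ_nonempty (fun a' => Q' (s', a'))| ≤ D := by
    intro s'
    refine (sup'_abs_sub_le _ _ _ _).trans (Finset.sup'_le _ _ fun a' _ => ?_)
    exact Finset.le_sup' (fun p : S × A => |Q p - Q' p|) (Finset.mem_univ (s', a'))
  have hM : |qInterventionOp P R c γ Q p.1 p.2 - qInterventionOp P R c γ Q' p.1 p.2|
      ≤ γ * D := by
    unfold qInterventionOp
    have : (R p.1 p.2 - c p.1 p.2 + γ * ∑ s'', P p.1 p.2 s'' *
          Finset.univ.sup' Finset.univ_nonempty (fun a'' => Q (s'', a''))) -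
        (R p.1 p.2 - c p.1 p.2 + γ * ∑ s'', P p.1 p.2 s'' *
          Finset.univ.sup' Finset.univ_nonempty (fun a'' => Q' (s'', a''))) =
        γ * ∑ s'', P p.1 p.2 s'' *
          (Finset.univ.sup' Finset.univ_nonempty (fun a'' => Q (s'', a'')) -
           Finset.univ.sup' Finset.univ_nonempty (fun a'' => Q' (s'', a''))) := by
      simp only [mul_sub, Finset.sum_sub_distrib]; ring
    rw [this, abs_mul, abs_of_nonneg hγ0]
    refine mul_le_mul_of_nonneg_left ?_ hγ0
    calc |∑ s'', P p.1 p.2 s'' * _| ≤ ∑ s'', |P p.1 p.2 s'' * _| :=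
          Finset.abs_sum_le_sum_abs _ _
      _ ≤ ∑ s'', P p.1 p.2 s'' * D := by
          refine Finset.sum_le_sum fun s'' _ => ?_
          rw [abs_mul, abs_of_nonneg (hP0 _ _ _)]
          exact mul_le_mul_of_nonneg_left (hsup s'') (hP0 _ _ _)
      _ = D := by rw [← Finset.sum_mul, hP1, one_mul]
  have hmax : ∀ s' : S,
      |max (qInterventionOp P R c γ Q p.1 p.2)
          (R p.1 a₀ + γ * Finset.univ.sup' Finset.univ_nonempty (fun a' => Q (s', a'))) -
        max (qInterventionOp P R c γ Q' p.1 p.2)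
          (R p.1 a₀ + γ * Finset.univ.sup' Finset.univ_nonempty (fun a' => Q' (s', a')))|
      ≤ γ * D := by
    intro s'
    refine (abs_max_sub_max_le_max _ _ _ _).trans (max_le hM ?_)
    have : (R p.1 a₀ + γ * Finset.univ.sup' Finset.univ_nonempty (fun a' => Q (s', a'))) -
        (R p.1 a₀ + γ * Finset.univ.sup' Finset.univ_nonempty (fun a' => Q' (s', a'))) =
        γ * (Finset.univ.sup' Finset.univ_nonempty (fun a' => Q (s', a')) -
          Finset.univ.sup' Finset.univ_nonempty (fun a' => Q' (s', a'))) := by ring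
    rw [this, abs_mul, abs_of_nonneg hγ0]
    exact mul_le_mul_of_nonneg_left (hsup s') hγ0
  unfold qBellmanOp
  rw [← Finset.sum_sub_distrib]
  calc |∑ s', (P p.1 p.2 s' * _ - P p.1 p.2 s' * _)| ≤ ∑ s', |_| :=
        Finset.abs_sum_le_sum_abs _ _
    _ ≤ ∑ s', P p.1 p.2 s' * (γ * D) := by
        refine Finset.sum_le_sum fun s' _ => ?_
        rw [← mul_sub, abs_mul, abs_of_nonneg (hP0 _ _ _)]
        exact mul_le_mul_of_nonneg_left (hmax s') (hP0 _ _ _)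
    _ = γ * D := by rw [← Finset.sum_mul, hP1, one_mul]

/-- `𝒯` is a `γ`-contraction in the sup norm, hence has a unique fixed point `Q*`. -/
theorem qBellmanOp_contraction_unique_fixedPoint
    {S A : Type*} [Fintype S] [Nonempty S] [Fintype A] [Nonempty A]
    (a₀ : A) (P : S → A → S → ℝ) (R c : S → A → ℝ) (γ : ℝ)
    (hP0 : ∀ s a s', 0 ≤ P s a s') (hP1 : ∀ s a, ∑ s', P s a s' = 1)
    (hc : ∀ s a, 0 ≤ c s a) (hγ0 : 0 ≤ γ) (hγ1 : γ < 1) :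
    (∀ Q Q' : S × A → ℝ,
      Finset.univ.sup' Finset.univ_nonempty
          (fun p : S × A => |qBellmanOp a₀ P R c γ Q p - qBellmanOp a₀ P R c γ Q' p|) ≤
        γ * Finset.univ.sup' Finset.univ_nonempty (fun p : S × A => |Q p - Q' p|)) ∧
    (∃! Qstar : S × A → ℝ, qBellmanOp a₀ P R c γ Qstar = Qstar) := by
  have hpt := qBellmanOp_pointwise a₀ P R c γ hP0 hP1 hγ0
  refine ⟨fun Q Q' => Finset.sup'_le _ _ fun p _ => hpt Q Q' p, ?_⟩
  have hK : ContractingWith ⟨γ, hγ0⟩ (qBellmanOp a₀ P R c γ) := by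
    refine ⟨by exact_mod_cast hγ1, ?_⟩
    apply LipschitzWith.of_dist_le_mul
    intro Q Q'
    rw [dist_pi_le_iff (by positivity)]
    intro p
    have hDle : Finset.univ.sup' Finset.univ_nonempty (fun p : S × A => |Q p - Q' p|) ≤
        dist Q Q' := by
      refine Finset.sup'_le _ _ fun q _ => ?_
      rw [← Real.dist_eq]
      exact dist_le_pi_dist Q Q' q
    calc dist (qBellmanOp a₀ P R c γ Q p) (qBellmanOp a₀ P R c γ Q' p)
        = |qBellmanOp a₀ P R c γ Q p - qBellmanOp a₀ P R c γ Q' p| := Real.dist_eq _ _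
      _ ≤ γ * Finset.univ.sup' Finset.univ_nonempty (fun p : S × A => |Q p - Q' p|) :=
          hpt Q Q' p
      _ ≤ (⟨γ, hγ0⟩ : NNReal) * dist Q Q' := mul_le_mul_of_nonneg_left hDle hγ0
  exact ⟨_, hK.fixedPoint_isFixedPt, fun y hy => hK.fixedPoint_unique hy⟩
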